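/- The probability that a uniformly random derangement of N elements contains at least one 2-cycle converges to 1 - e^{-1/2} as N → ∞. -/

import Mathlib

open Equiv Finset Filter Topology

/-- permutation with all cycles of length ≥ 3 -/
def IsGood {α : Type*} (σ : Equiv.Perm α) : Prop := ∀ x, σ (σ x) ≠ x

instance {α : Type*} [Fintype α] [DecidableEq α] (σ : Equiv.Perm α) :
    Decidable (IsGood σ) := by unfold IsGood; infer_instance

/-- the transferred condition on the smaller permutation -/
def CondC {n : ℕ} (p' : Fin n) (e : Equiv.Perm (Fin n)) : Prop :=
  e p' ≠ p' ∧ ∀ i, e (e i) = i → e i = p' ∨ i = p'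

instance {n : ℕ} (p' : Fin n) (e : Equiv.Perm (Fin n)) : Decidable (CondC p' e) := by
  unfold CondC; infer_instance

lemma good_decompose_succ_iff {n : ℕ} (p' : Fin n) (e : Equiv.Perm (Fin n)) :
    IsGood (Equiv.Perm.decomposeFin.symm (p'.succ, e)) ↔ CondC p' e := by
  set σ := Equiv.Perm.decomposeFin.symm (p'.succ, e) with hσ
  have h0 : σ 0 = p'.succ := Equiv.Perm.decomposeFin_symm_apply_zero _ _
  have hs : ∀ i : Fin n, σ i.succ = if e i = p' then 0 else (e i).succ := by
    intro i
    rw [hσ, Equiv.Perm.decomposeFin_symm_apply_succ]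
    rcases eq_or_ne (e i) p' with h | h
    · simp [h, Equiv.swap_apply_right]
    · rw [Equiv.swap_apply_of_ne_of_ne (Fin.succ_ne_zero _) (by simpa [Fin.succ_inj] using h)]
      simp [h]
  have key0 : σ (σ 0) ≠ 0 ↔ e p' ≠ p' := by
    rw [h0, hs p']
    rcases eq_or_ne (e p') p' with h | h
    · simp [h]
    · simp [h, Fin.succ_ne_zero]
  constructor
  · intro hg
    have h1 : e p' ≠ p' := key0.mp (hg 0)
    refine ⟨h1, fun i hi => ?_⟩
    by_cases hip : e i = p'
    · exact Or.inl hip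
    · have hgi := hg i.succ
      rw [hs i, if_neg hip, hs (e i)] at hgi
      by_cases hi2 : i = p'
      · exact Or.inr hi2
      · exfalso
        rw [hi, if_neg hi2] at hgi
        exact hgi rfl
  · rintro ⟨h1, h2⟩
    intro x
    refine Fin.cases ?_ ?_ x
    · exact key0.mpr h1
    · intro i
      rw [hs i]
      by_cases hip : e i = p'
      · rw [if_pos hip, h0]
        intro hc
        have hpi : p' = i := Fin.succ_injective _ hc
        cases hpi
        exact h1 hip
      · rw [if_neg hip, hs (e i)]
        by_cases hii : e (e i) = p'
        · rw [if_pos hii]; exact (Fin.succ_ne_zero i).symm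
        · rw [if_neg hii]
          intro hc
          have hc' : e (e i) = i := by simpa [Fin.succ_inj] using hc
          rcases h2 i hc' with h | h
          · exact hip h
          · exact hii (hc'.trans h)

/-- number of permutations all of whose cycles have length at least 3 -/
def Qg (n : ℕ) : ℕ := Fintype.card {σ : Equiv.Perm (Fin n) // IsGood σ}

lemma decomposeFin_fst {n : ℕ} (σ : Equiv.Perm (Fin (n + 1))) :
    (Equiv.Perm.decomposeFin σ).1 = σ 0 := by
  conv_rhs => rw [← Equiv.symm_apply_apply Equiv.Perm.decomposeFin σ,
    ← Prod.mk.eta (p := Equiv.Perm.decomposeFin σ), Equiv.Perm.decomposeFin_symm_apply_zero]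

lemma decomp_eq {n : ℕ} (p' : Fin n) (σ : Equiv.Perm (Fin (n + 1))) (h : σ 0 = p'.succ) :
    Equiv.Perm.decomposeFin.symm (p'.succ, (Equiv.Perm.decomposeFin σ).2) = σ := by
  conv_rhs => rw [← Equiv.symm_apply_apply Equiv.Perm.decomposeFin σ,
    ← Prod.mk.eta (p := Equiv.Perm.decomposeFin σ)]
  congr 1
  rw [decomposeFin_fst, h]

lemma card_fiber {n : ℕ} (p' : Fin n) :
    Fintype.card {σ : Equiv.Perm (Fin (n + 1)) // IsGood σ ∧ σ 0 = p'.succ}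
      = Fintype.card {e : Equiv.Perm (Fin n) // CondC p' e} := by
  apply Fintype.card_congr
  refine
    { toFun := fun σ => ⟨(Equiv.Perm.decomposeFin σ.1).2, ?_⟩
      invFun := fun e => ⟨Equiv.Perm.decomposeFin.symm (p'.succ, e.1),
        (good_decompose_succ_iff p' e.1).mpr e.2,
        Equiv.Perm.decomposeFin_symm_apply_zero _ _⟩
      left_inv := fun σ => Subtype.ext (decomp_eq p' σ.1 σ.2.2)
      right_inv := fun e => Subtype.ext (by simp) }
  · exact (good_decompose_succ_iff p' _).mp (by rw [decomp_eq p' σ.1 σ.2.2]; exact σ.2.1)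

lemma card_good_succ (n : ℕ) :
    Qg (n + 1) = ∑ p' : Fin n, Fintype.card {e : Equiv.Perm (Fin n) // CondC p' e} := by
  rw [Qg, Fintype.card_subtype]
  rw [Finset.card_eq_sum_card_fiberwise (f := fun σ : Equiv.Perm (Fin (n+1)) => σ 0)
    (t := Finset.univ) (fun x _ => Finset.mem_univ _)]
  rw [Fin.sum_univ_succ]
  have h0 : (Finset.filter (fun σ : Equiv.Perm (Fin (n+1)) => σ 0 = 0)
      (Finset.filter (fun σ => IsGood σ) Finset.univ)).card = 0 := by
    rw [Finset.card_eq_zero, Finset.filter_eq_empty_iff]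
    rintro σ hσ h
    rw [Finset.mem_filter] at hσ
    exact hσ.2 0 (by rw [h, h])
  rw [h0, zero_add]
  refine Finset.sum_congr rfl fun p' _ => ?_
  rw [← card_fiber p', Fintype.card_subtype, Finset.filter_filter]

section TwoCycle

variable {m : ℕ} {p' q : Fin m}

private lemma pred_iff_of (hpq : q ≠ p') (e : Equiv.Perm (Fin m)) (he1 : e p' = q)
    (heq : e q = p') : ∀ x : Fin m, (x ≠ p' ∧ x ≠ q) ↔ (e x ≠ p' ∧ e x ≠ q) := by
  intro x
  constructor
  · rintro ⟨h1, h2⟩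
    constructor
    · intro hc; exact h2 (e.injective (hc.trans heq.symm))
    · intro hc; exact h1 (e.injective (hc.trans he1.symm))
  · rintro ⟨h1, h2⟩
    constructor
    · rintro rfl; exact h2 he1
    · rintro rfl; exact h1 heq

lemma card_twocycle_fiber (hpq : q ≠ p') :
    Fintype.card {e : Equiv.Perm (Fin m) // (CondC p' e ∧ e (e p') = p') ∧ e p' = q}
      = Fintype.card {g : Equiv.Perm {i : Fin m // i ≠ p' ∧ i ≠ q} // IsGood g} := by
  apply Fintype.card_congr
  have heqq : ∀ (e : Equiv.Perm (Fin m)), e (e p') = p' → e p' = q → e q = p' := by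
    intro e hB he1; rw [← he1]; exact hB
  refine
    { toFun := fun e =>
        ⟨e.1.subtypePerm (fun x => (pred_iff_of hpq e.1 e.2.2 (heqq e.1 e.2.1.2 e.2.2) x).symm), ?_⟩
      invFun := fun g =>
        ⟨Equiv.swap p' q * Equiv.Perm.ofSubtype g.1, ?_, ?_⟩
      left_inv := ?_
      right_inv := ?_ }
  · -- IsGood of restricted perm
    obtain ⟨e, ⟨⟨hC1, hC2⟩, hB⟩, he1⟩ := e
    rintro ⟨x, hx1, hx2⟩ hc
    rw [Subtype.ext_iff] at hc
    simp only [Equiv.Perm.subtypePerm_apply] at hc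
    rcases hC2 x hc with h | h
    · exact hx2 (e.injective (h.trans (heqq e hB he1).symm))
    · exact hx1 h
  · -- CondC ∧ B for the reconstructed perm
    obtain ⟨g, hg⟩ := g
    have hfp : Equiv.Perm.ofSubtype g p' = p' :=
      Equiv.Perm.ofSubtype_apply_of_not_mem g (by simp)
    have hfq : Equiv.Perm.ofSubtype g q = q :=
      Equiv.Perm.ofSubtype_apply_of_not_mem g (by simp [hpq])
    have hep : (Equiv.swap p' q * Equiv.Perm.ofSubtype g) p' = q := by
      simp [hfp, Equiv.swap_apply_left]
    have heq : (Equiv.swap p' q * Equiv.Perm.ofSubtype g) q = p' := by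
      simp [hfq, Equiv.swap_apply_right]
    have hT : ∀ (x : Fin m) (hx1 : x ≠ p') (hx2 : x ≠ q),
        (Equiv.swap p' q * Equiv.Perm.ofSubtype g) x
          = (g ⟨x, ⟨hx1, hx2⟩⟩ : {i : Fin m // i ≠ p' ∧ i ≠ q}) := by
      intro x hx1 hx2
      have := Equiv.Perm.ofSubtype_apply_of_mem g (a := x) ⟨hx1, hx2⟩
      simp only [Equiv.Perm.mul_apply, this]
      exact Equiv.swap_apply_of_ne_of_ne (g ⟨x, hx1, hx2⟩).2.1 (g ⟨x, hx1, hx2⟩).2.2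
    constructor
    · constructor
      · rw [hep]; exact hpq
      · intro i hi
        by_cases h1 : i = p'
        · exact Or.inr h1
        by_cases h2 : i = q
        · subst h2; rw [heq]; exact Or.inl rfl
        · exfalso
          rw [hT i h1 h2] at hi
          set y := g ⟨i, h1, h2⟩ with hy
          rw [hT y.1 y.2.1 y.2.2] at hi
          apply hg ⟨i, h1, h2⟩
          apply Subtype.ext
          have : (⟨y.1, y.2.1, y.2.2⟩ : {i : Fin m // i ≠ p' ∧ i ≠ q}) = y := rfl
          rw [this] at hi
          exact hi
    · rw [hep, heq]
  · -- e p' = q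
    obtain ⟨g, hg⟩ := g
    rw [Equiv.Perm.mul_apply,
      Equiv.Perm.ofSubtype_apply_of_not_mem g (by simp), Equiv.swap_apply_left]
  · -- left inverse
    rintro ⟨e, ⟨⟨hC1, hC2⟩, hB⟩, he1⟩
    apply Subtype.ext
    have heq2 : e q = p' := heqq e hB he1
    apply Equiv.ext
    intro x
    simp only [Equiv.Perm.mul_apply]
    by_cases h1 : x = p'
    · subst h1
      rw [Equiv.Perm.ofSubtype_apply_of_not_mem _ (by simp), Equiv.swap_apply_left, he1]
    by_cases h2 : x = q
    · subst h2
      rw [Equiv.Perm.ofSubtype_apply_of_not_mem _ (by simp [hpq]), Equiv.swap_apply_right, heq2]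
    · rw [Equiv.Perm.ofSubtype_apply_of_mem _ (a := x) ⟨h1, h2⟩]
      simp only [Equiv.Perm.subtypePerm_apply]
      have hpred := (pred_iff_of hpq e he1 heq2 x).mp ⟨h1, h2⟩
      exact Equiv.swap_apply_of_ne_of_ne hpred.1 hpred.2
  · -- right inverse
    rintro ⟨g, hg⟩
    apply Subtype.ext
    apply Equiv.ext
    rintro ⟨x, hx1, hx2⟩
    apply Subtype.ext
    simp only [Equiv.Perm.subtypePerm_apply]
    simp only [Equiv.Perm.mul_apply]
    rw [Equiv.Perm.ofSubtype_apply_of_mem g (a := x) ⟨hx1, hx2⟩]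
    exact Equiv.swap_apply_of_ne_of_ne (g ⟨x, hx1, hx2⟩).2.1 (g ⟨x, hx1, hx2⟩).2.2

end TwoCycle

lemma card_good_congr {α β : Type*} [Fintype α] [DecidableEq α] [Fintype β] [DecidableEq β]
    (h : α ≃ β) :
    Fintype.card {σ : Equiv.Perm α // IsGood σ} = Fintype.card {σ : Equiv.Perm β // IsGood σ} := by
  apply Fintype.card_congr
  refine h.permCongr.subtypeEquiv fun σ => ?_
  constructor
  · intro hσ y hc
    apply hσ (h.symm y)
    have := congrArg h.symm hc
    simpa [Equiv.permCongr_apply] using this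
  · intro hσ x hc
    apply hσ (h x)
    simp only [Equiv.permCongr_apply, Equiv.symm_apply_apply]
    rw [hc]

lemma card_compl_pair {n : ℕ} {p' q : Fin (n + 2)} (hpq : q ≠ p') :
    Fintype.card {i : Fin (n + 2) // i ≠ p' ∧ i ≠ q} = n := by
  rw [Fintype.card_subtype]
  have h : (univ.filter fun i : Fin (n + 2) => i ≠ p' ∧ i ≠ q) = univ \ {p', q} := by
    ext i
    simp [not_or]
  rw [h, Finset.card_sdiff_of_subset (by simp), Finset.card_univ, Fintype.card_fin,
    Finset.card_pair (fun hc => hpq hc.symm)]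
  omega

lemma condC_not_B_iff_good {n : ℕ} (p' : Fin n) (e : Equiv.Perm (Fin n)) :
    (CondC p' e ∧ ¬ e (e p') = p') ↔ IsGood e := by
  constructor
  · rintro ⟨⟨h1, h2⟩, hB⟩ x hc
    rcases h2 x hc with h | h
    · have h3 : e p' = x := by rw [← h]; exact hc
      exact hB (by rw [h3, h])
    · subst h; exact hB hc
  · intro hg
    exact ⟨⟨fun hc => hg p' (by rw [hc, hc]), fun i hi => absurd hi (hg i)⟩, hg p'⟩

lemma card_condC {n : ℕ} (p' : Fin (n + 2)) :
    Fintype.card {e : Equiv.Perm (Fin (n + 2)) // CondC p' e}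
      = Qg (n + 2) + (n + 1) * Qg n := by
  classical
  rw [Fintype.card_subtype]
  rw [← Finset.card_filter_add_card_filter_not
    (s := univ.filter fun e : Equiv.Perm (Fin (n+2)) => CondC p' e)
    (p := fun e => e (e p') = p')]
  have h1 : ((univ.filter fun e : Equiv.Perm (Fin (n+2)) => CondC p' e).filter
      fun e => ¬ e (e p') = p').card = Qg (n + 2) := by
    rw [Finset.filter_filter, Qg, Fintype.card_subtype]
    congr 1
    ext e
    simp only [Finset.mem_filter, Finset.mem_univ, true_and]
    exact condC_not_B_iff_good p' e
  have h2 : ((univ.filter fun e : Equiv.Perm (Fin (n+2)) => CondC p' e).filter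
      fun e => e (e p') = p').card = (n + 1) * Qg n := by
    rw [Finset.filter_filter]
    rw [Finset.card_eq_sum_card_fiberwise
      (f := fun e : Equiv.Perm (Fin (n+2)) => e p') (t := univ) (fun _ _ => Finset.mem_univ _)]
    rw [← Finset.sum_erase_add _ _ (Finset.mem_univ p')]
    have hp0 : ((univ.filter fun e : Equiv.Perm (Fin (n+2)) => CondC p' e ∧ e (e p') = p').filter
        fun e => e p' = p').card = 0 := by
      rw [Finset.card_eq_zero, Finset.filter_eq_empty_iff]
      rintro e he hc
      rw [Finset.mem_filter] at he
      exact he.2.1.1 hc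
    have hq : ∀ q ∈ univ.erase p',
        ((univ.filter fun e : Equiv.Perm (Fin (n+2)) => CondC p' e ∧ e (e p') = p').filter
          fun e => e p' = q).card = Qg n := by
      intro q hq
      have hqp : q ≠ p' := Finset.ne_of_mem_erase hq
      rw [Finset.filter_filter, ← Fintype.card_subtype]
      have e1 : Fintype.card {e : Equiv.Perm (Fin (n+2)) // (CondC p' e ∧ e (e p') = p') ∧ e p' = q}
          = Fintype.card {g : Equiv.Perm {i : Fin (n+2) // i ≠ p' ∧ i ≠ q} // IsGood g} :=
        card_twocycle_fiber hqp
      rw [e1, Qg]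
      exact card_good_congr (Fintype.equivFinOfCardEq (card_compl_pair hqp))
    rw [Finset.sum_congr rfl hq, Finset.sum_const, hp0, add_zero, smul_eq_mul,
      Finset.card_erase_of_mem (Finset.mem_univ _), Finset.card_univ, Fintype.card_fin]
    have : n + 2 - 1 = n + 1 := by omega
    rw [this]
  rw [h1, h2]
  ring

theorem Qg_rec (n : ℕ) : Qg (n + 3) = (n + 2) * (Qg (n + 2) + (n + 1) * Qg n) := by
  rw [show n + 3 = (n + 2) + 1 from rfl, card_good_succ (n + 2),
    Finset.sum_congr rfl (fun p' _ => card_condC p'), Finset.sum_const, Finset.card_univ,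
    Fintype.card_fin, smul_eq_mul]

theorem Qg_zero : Qg 0 = 1 := by decide
theorem Qg_one : Qg 1 = 0 := by decide
theorem Qg_two : Qg 2 = 0 := by decide

lemma two_mem_cycleType_iff {α : Type*} [Fintype α] [DecidableEq α] (σ : Equiv.Perm α) :
    2 ∈ σ.cycleType ↔ ∃ x, σ x ≠ x ∧ σ (σ x) = x := by
  rw [Equiv.Perm.cycleType_def, Multiset.mem_map]
  constructor
  · rintro ⟨c, hc, hcard⟩
    rw [Finset.mem_val] at hc
    have hswap : c.IsSwap := Equiv.Perm.card_support_eq_two.mp hcard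
    obtain ⟨a, b, hab, rfl⟩ := hswap
    have hmem := (Equiv.Perm.mem_cycleFactorsFinset_iff).mp hc
    have ha : a ∈ (Equiv.swap a b).support := by
      rw [Equiv.Perm.support_swap hab]; simp
    have hb : b ∈ (Equiv.swap a b).support := by
      rw [Equiv.Perm.support_swap hab]; simp
    have hsa : σ a = b := by rw [← hmem.2 a ha, Equiv.swap_apply_left]
    have hsb : σ b = a := by rw [← hmem.2 b hb, Equiv.swap_apply_right]
    exact ⟨a, by rw [hsa]; exact hab.symm, by rw [hsa, hsb]⟩
  · rintro ⟨x, hx, h2⟩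
    refine ⟨σ.cycleOf x, ?_, ?_⟩
    · rw [Finset.mem_val]
      exact Equiv.Perm.cycleOf_mem_cycleFactorsFinset_iff.mpr (Equiv.Perm.mem_support.mpr hx)
    · have hpow : ∀ k : ℕ, (σ ^ k) x = x ∨ (σ ^ k) x = σ x := by
        intro k
        induction k with
        | zero => left; rfl
        | succ k ih =>
          rw [pow_succ', Equiv.Perm.mul_apply]
          rcases ih with h | h
          · right; rw [h]
          · left; rw [h, h2]
      have hsupp : (σ.cycleOf x).support = {x, σ x} := by
        ext y
        rw [Equiv.Perm.mem_support_cycleOf_iff]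
        constructor
        · rintro ⟨hsc, -⟩
          obtain ⟨k, -, hk⟩ := hsc.exists_pow_eq'
          rcases hpow k with h | h
          · rw [← hk, h]; simp
          · rw [← hk, h]; simp
        · intro hy
          simp only [Finset.mem_insert, Finset.mem_singleton] at hy
          refine ⟨?_, Equiv.Perm.mem_support.mpr hx⟩
          rcases hy with rfl | rfl
          · exact Equiv.Perm.SameCycle.refl σ y
          · exact Equiv.Perm.sameCycle_apply_right.mpr (Equiv.Perm.SameCycle.refl σ x)
      simp only [Function.comp_apply, hsupp]
      rw [Finset.card_insert_of_notMem (by simp [Ne.symm hx]), Finset.card_singleton]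

lemma paired_add_good (N : ℕ) :
    Nat.card {σ : Equiv.Perm (Fin N) // (∀ i, σ i ≠ i) ∧ 2 ∈ σ.cycleType} + Qg N
      = Nat.card {σ : Equiv.Perm (Fin N) // ∀ i, σ i ≠ i} := by
  classical
  have key : ∀ σ : Equiv.Perm (Fin N),
      ((∀ i, σ i ≠ i) ∧ 2 ∈ σ.cycleType) ↔ ((∀ i, σ i ≠ i) ∧ ¬ IsGood σ) := by
    intro σ
    constructor
    · rintro ⟨hd, h2⟩
      obtain ⟨x, hx1, hx2⟩ := (two_mem_cycleType_iff σ).mp h2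
      exact ⟨hd, fun hg => hg x hx2⟩
    · rintro ⟨hd, hng⟩
      refine ⟨hd, (two_mem_cycleType_iff σ).mpr ?_⟩
      rw [IsGood, not_forall] at hng
      obtain ⟨x, hx⟩ := hng
      rw [not_ne_iff] at hx
      exact ⟨x, hd x, hx⟩
  have key2 : ∀ σ : Equiv.Perm (Fin N), IsGood σ ↔ ((∀ i, σ i ≠ i) ∧ IsGood σ) := by
    intro σ
    constructor
    · intro hg
      refine ⟨fun i hc => hg i (by rw [hc, hc]), hg⟩
    · exact fun h => h.2
  rw [Nat.card_eq_fintype_card, Nat.card_eq_fintype_card, Qg]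
  rw [Fintype.card_subtype, Fintype.card_subtype, Fintype.card_subtype]
  rw [← Finset.card_filter_add_card_filter_not
    (s := univ.filter fun σ : Equiv.Perm (Fin N) => ∀ i, σ i ≠ i)
    (p := fun σ => IsGood σ), Finset.filter_filter, Finset.filter_filter]
  have e1 : (univ.filter fun σ : Equiv.Perm (Fin N) => (∀ i, σ i ≠ i) ∧ IsGood σ)
      = univ.filter fun σ : Equiv.Perm (Fin N) => IsGood σ := by
    ext σ
    simp only [Finset.mem_filter, Finset.mem_univ, true_and]
    exact (key2 σ).symm
  have e2 : (univ.filter fun σ : Equiv.Perm (Fin N) => (∀ i, σ i ≠ i) ∧ ¬ IsGood σ)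
      = univ.filter fun σ : Equiv.Perm (Fin N) => (∀ i, σ i ≠ i) ∧ 2 ∈ σ.cycleType := by
    ext σ
    simp only [Finset.mem_filter, Finset.mem_univ, true_and]
    exact (key σ).symm
  rw [e1, e2]
  exact Nat.add_comm _ _

noncomputable def fterm (p : ℕ × ℕ) : ℝ :=
  ((-1 : ℝ) ^ p.1 / p.1.factorial) * ((-1 / 2 : ℝ) ^ p.2 / p.2.factorial)

def Sidx (n : ℕ) : Finset (ℕ × ℕ) :=
  (Finset.range (n + 1) ×ˢ Finset.range (n + 1)).filter fun p => p.1 + 2 * p.2 ≤ n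

def Lline (m : ℕ) : Finset (ℕ × ℕ) :=
  (Finset.range (m + 1) ×ˢ Finset.range (m + 1)).filter fun p => p.1 + 2 * p.2 = m

lemma mem_Sidx {n : ℕ} {p : ℕ × ℕ} : p ∈ Sidx n ↔ p.1 + 2 * p.2 ≤ n := by
  simp only [Sidx, Finset.mem_filter, Finset.mem_product, Finset.mem_range]
  omega

lemma mem_Lline {m : ℕ} {p : ℕ × ℕ} : p ∈ Lline m ↔ p.1 + 2 * p.2 = m := by
  simp only [Lline, Finset.mem_filter, Finset.mem_product, Finset.mem_range]
  omega

noncomputable def qr (n : ℕ) : ℝ := ∑ p ∈ Sidx n, fterm p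
noncomputable def El (m : ℕ) : ℝ := ∑ p ∈ Lline m, fterm p

lemma qr_succ (n : ℕ) : qr (n + 1) = qr n + El (n + 1) := by
  rw [qr, qr, El]
  have hsplit : Sidx (n + 1) = Sidx n ∪ Lline (n + 1) := by
    ext p
    simp only [Finset.mem_union, mem_Sidx, mem_Lline]
    omega
  rw [hsplit, Finset.sum_union]
  rw [Finset.disjoint_left]
  intro p hp hq
  rw [mem_Sidx] at hp
  rw [mem_Lline] at hq
  omega

lemma factorial_cast_ne (k : ℕ) : ((k.factorial : ℝ)) ≠ 0 :=
  Nat.cast_ne_zero.mpr k.factorial_ne_zero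

lemma key_line (n : ℕ) :
    ((n : ℝ) + 3) * El (n + 3) = -(El (n + 2) + El (n + 1)) := by
  have hstep : ((n : ℝ) + 3) * El (n + 3)
      = (∑ p ∈ Lline (n + 3), (p.1 : ℝ) * fterm p)
        + ∑ p ∈ Lline (n + 3), (2 * (p.2 : ℝ)) * fterm p := by
    rw [El, Finset.mul_sum, ← Finset.sum_add_distrib]
    refine Finset.sum_congr rfl fun p hp => ?_
    have h := mem_Lline.mp hp
    have h2 : (p.1 : ℝ) + 2 * (p.2 : ℝ) = (n : ℝ) + 3 := by
      have := congrArg (Nat.cast (R := ℝ)) h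
      push_cast at this
      linarith
    rw [← h2]
    ring
  have hS1 : (∑ p ∈ Lline (n + 3), (p.1 : ℝ) * fterm p) = -El (n + 2) := by
    rw [← Finset.sum_filter_of_ne (p := fun p : ℕ × ℕ => p.1 ≠ 0)
      (by intro p _ h hc; rw [hc] at h; simpa using h)]
    rw [El, ← Finset.sum_neg_distrib]
    refine Finset.sum_nbij' (fun p => (p.1 - 1, p.2)) (fun p => (p.1 + 1, p.2)) ?_ ?_ ?_ ?_ ?_
    · intro p hp
      simp only [Finset.mem_filter, mem_Lline] at hp ⊢
      omega
    · intro p hp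
      simp only [Finset.mem_filter, mem_Lline] at hp ⊢
      omega
    · intro p hp
      simp only [Finset.mem_filter] at hp
      have := hp.2
      ext <;> simp <;> omega
    · intro p hp
      ext <;> simp
    · rintro ⟨a, b⟩ hp
      simp only [Finset.mem_filter] at hp
      have ha := hp.2
      obtain ⟨k, hk⟩ : ∃ k, a = k + 1 := ⟨a - 1, by omega⟩
      subst hk
      simp only [fterm, Nat.add_sub_cancel]
      rw [Nat.factorial_succ, pow_succ]
      push_cast
      field_simp
  have hS2 : (∑ p ∈ Lline (n + 3), (2 * (p.2 : ℝ)) * fterm p) = -El (n + 1) := by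
    rw [← Finset.sum_filter_of_ne (p := fun p : ℕ × ℕ => p.2 ≠ 0)
      (by intro p _ h hc; rw [hc] at h; simpa using h)]
    rw [El, ← Finset.sum_neg_distrib]
    refine Finset.sum_nbij' (fun p => (p.1, p.2 - 1)) (fun p => (p.1, p.2 + 1)) ?_ ?_ ?_ ?_ ?_
    · intro p hp
      simp only [Finset.mem_filter, mem_Lline] at hp ⊢
      omega
    · intro p hp
      simp only [Finset.mem_filter, mem_Lline] at hp ⊢
      omega
    · intro p hp
      simp only [Finset.mem_filter] at hp
      have := hp.2
      ext <;> simp <;> omega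
    · intro p hp
      ext <;> simp
    · rintro ⟨a, b⟩ hp
      simp only [Finset.mem_filter] at hp
      have hb := hp.2
      obtain ⟨k, hk⟩ : ∃ k, b = k + 1 := ⟨b - 1, by omega⟩
      subst hk
      simp only [fterm, Nat.add_sub_cancel]
      rw [Nat.factorial_succ, pow_succ]
      push_cast
      field_simp
  rw [hstep, hS1, hS2]
  ring

lemma qr_rec (n : ℕ) : ((n : ℝ) + 3) * qr (n + 3) = ((n : ℝ) + 2) * qr (n + 2) + qr n := by
  have h3 : qr (n + 3) = qr (n + 2) + El (n + 3) := qr_succ (n + 2)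
  have h2 : qr (n + 2) = qr (n + 1) + El (n + 2) := qr_succ (n + 1)
  have h1 : qr (n + 1) = qr n + El (n + 1) := qr_succ n
  have hk := key_line n
  linear_combination ((n : ℝ) + 3) * h3 + hk + h2 + h1

lemma Sidx_zero : Sidx 0 = {(0, 0)} := by decide
lemma Sidx_one : Sidx 1 = {(0, 0), (1, 0)} := by decide
lemma Sidx_two : Sidx 2 = {(0, 0), (1, 0), (2, 0), (0, 1)} := by decide

lemma qr_zero : qr 0 = 1 := by
  rw [qr, Sidx_zero]
  simp [fterm]
lemma qr_one : qr 1 = 0 := by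
  rw [qr, Sidx_one, Finset.sum_insert (by decide), Finset.sum_singleton]
  simp [fterm]
lemma qr_two : qr 2 = 0 := by
  rw [qr, Sidx_two]
  rw [Finset.sum_insert (by decide), Finset.sum_insert (by decide),
    Finset.sum_insert (by decide), Finset.sum_singleton]
  simp [fterm]
  norm_num

lemma Qg_eq_qr : ∀ n : ℕ, (Qg n : ℝ) = n.factorial * qr n := by
  intro n
  induction n using Nat.strong_induction_on with
  | _ n ih =>
    rcases n with _ | _ | _ | m
    · simp [Qg_zero, qr_zero]
    · simp [Qg_one, qr_one]
    · simp [Qg_two, qr_two]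
    · have ih2 := ih (m + 2) (by omega)
      have ih0 := ih m (by omega)
      have hrec := Qg_rec m
      have hq := qr_rec m
      have hcast : ((Qg (m + 3) : ℝ)) = ((m : ℝ) + 2) * ((Qg (m + 2) : ℝ) + ((m : ℝ) + 1) * (Qg m : ℝ)) := by
        rw [hrec]
        push_cast
        ring
      have hfact3 : (((m + 3).factorial : ℝ)) = ((m : ℝ) + 3) * ((m + 2).factorial : ℝ) := by
        rw [show m + 3 = (m + 2) + 1 from rfl, Nat.factorial_succ]
        push_cast
        ring
      have hfact2 : (((m + 2).factorial : ℝ)) = ((m : ℝ) + 2) * ((m : ℝ) + 1) * (m.factorial : ℝ) := by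
        rw [show m + 2 = (m + 1) + 1 from rfl, Nat.factorial_succ, Nat.factorial_succ]
        push_cast
        ring
      rw [hcast, ih2, ih0, hfact3]
      calc ((m : ℝ) + 2) * ((m + 2).factorial * qr (m + 2) + ((m : ℝ) + 1) * (m.factorial * qr m))
          = ((m + 2).factorial : ℝ) * (((m : ℝ) + 2) * qr (m + 2) + qr m) := by
            rw [hfact2]; ring
        _ = ((m + 2).factorial : ℝ) * (((m : ℝ) + 3) * qr (m + 3)) := by rw [hq]
        _ = ((m : ℝ) + 3) * ((m + 2).factorial : ℝ) * qr (m + 3) := by ring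


lemma qr_tendsto : Tendsto qr atTop (𝓝 (Real.exp (-1) * Real.exp (-(1 / 2)))) := by
  have hgn : Summable fun i : ℕ => ‖(-1 : ℝ) ^ i / i.factorial‖ := by
    have : ∀ i : ℕ, ‖(-1 : ℝ) ^ i / i.factorial‖ = (1 : ℝ) ^ i / i.factorial := by
      intro i
      simp [norm_div, norm_pow, Real.norm_natCast]
    simpa [this] using Real.summable_pow_div_factorial 1
  have hhn : Summable fun j : ℕ => ‖(-1 / 2 : ℝ) ^ j / j.factorial‖ := by
    have : ∀ j : ℕ, ‖(-1 / 2 : ℝ) ^ j / j.factorial‖ = (1 / 2 : ℝ) ^ j / j.factorial := by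
      intro j
      rw [norm_div, norm_pow, Real.norm_natCast, Real.norm_eq_abs, abs_div, abs_neg, abs_one]
      norm_num
    simpa [this] using Real.summable_pow_div_factorial (1 / 2)
  have hsum : Summable (fun p : ℕ × ℕ => ((-1 : ℝ) ^ p.1 / p.1.factorial) *
      ((-1 / 2 : ℝ) ^ p.2 / p.2.factorial)) :=
    summable_mul_of_summable_norm (R := ℝ) (f := fun i : ℕ => (-1 : ℝ) ^ i / i.factorial)
      (g := fun j : ℕ => (-1 / 2 : ℝ) ^ j / j.factorial) hgn hhn
  have htsum : ∑' p : ℕ × ℕ, ((-1 : ℝ) ^ p.1 / p.1.factorial) *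
      ((-1 / 2 : ℝ) ^ p.2 / p.2.factorial) = Real.exp (-1) * Real.exp (-(1 / 2)) := by
    rw [← tsum_mul_tsum_of_summable_norm (R := ℝ)
      (f := fun i : ℕ => (-1 : ℝ) ^ i / i.factorial)
      (g := fun j : ℕ => (-1 / 2 : ℝ) ^ j / j.factorial) hgn hhn]
    congr 1
    · rw [Real.exp_eq_exp_ℝ, NormedSpace.exp_eq_tsum_div]
    · rw [Real.exp_eq_exp_ℝ, NormedSpace.exp_eq_tsum_div]
      norm_num
  have hmono : Monotone Sidx := by
    intro a b hab
    intro p hp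
    rw [mem_Sidx] at hp ⊢
    omega
  have hexh : Tendsto Sidx atTop atTop :=
    tendsto_atTop_finset_of_monotone hmono fun p => ⟨p.1 + 2 * p.2, mem_Sidx.mpr le_rfl⟩
  have hfs : Summable fterm := hsum
  have := (hfs.hasSum.comp hexh)
  rw [show ∑' p : ℕ × ℕ, fterm p = ∑' p : ℕ × ℕ, ((-1 : ℝ) ^ p.1 / p.1.factorial) *
      ((-1 / 2 : ℝ) ^ p.2 / p.2.factorial) from rfl, htsum] at this
  exact this


/-- Number of derangements of an `N`-element set. -/
noncomputable def numDerangementsOf (N : ℕ) : ℕ :=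
  Nat.card {σ : Equiv.Perm (Fin N) // ∀ i, σ i ≠ i}

/-- Number of fixed-point-free permutations of an `N`-element set having at least
one 2-cycle. -/
noncomputable def numPairedDerangements (N : ℕ) : ℕ :=
  Nat.card {σ : Equiv.Perm (Fin N) // (∀ i, σ i ≠ i) ∧ 2 ∈ σ.cycleType}

lemma paired_add_good' (N : ℕ) :
    numPairedDerangements N + Qg N = numDerangementsOf N := by
  unfold numPairedDerangements numDerangementsOf
  exact paired_add_good N

lemma numDerangementsOf_eq (N : ℕ) : numDerangementsOf N = numDerangements N := by
  rw [numDerangementsOf, Nat.card_eq_fintype_card, ← card_derangements_fin_eq_numDerangements]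
  exact Fintype.card_congr (Equiv.refl _)

theorem prob_at_least_one_pair_tendsto :
    Filter.Tendsto
      (fun N : ℕ => (numPairedDerangements N : ℝ) / (numDerangementsOf N : ℝ))
      Filter.atTop (nhds (1 - Real.exp (-(1 / 2)))) := by
  have hD : Tendsto (fun N : ℕ => (numDerangementsOf N : ℝ) / N.factorial) atTop
      (𝓝 (Real.exp (-1))) := by
    refine numDerangements_tendsto_inv_e.congr fun N => ?_
    rw [numDerangementsOf_eq]
  have hQ : Tendsto (fun N : ℕ => (Qg N : ℝ) / N.factorial) atTop
      (𝓝 (Real.exp (-1) * Real.exp (-(1 / 2)))) := by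
    refine qr_tendsto.congr fun N => ?_
    rw [Qg_eq_qr, mul_comm, mul_div_assoc, div_self (factorial_cast_ne N), mul_one]
  have hquot := hQ.div hD (Real.exp_ne_zero (-1))
  have hlim : Real.exp (-1) * Real.exp (-(1 / 2)) / Real.exp (-1) = Real.exp (-(1 / 2)) := by
    rw [mul_comm, mul_div_assoc, div_self (Real.exp_ne_zero _), mul_one]
  rw [hlim] at hquot
  have hfinal := (tendsto_const_nhds (x := (1 : ℝ)) (f := (atTop : Filter ℕ))).sub hquot
  refine Filter.Tendsto.congr' ?_ hfinal
  have hpos : ∀ᶠ N in atTop, 0 < (numDerangementsOf N : ℝ) / N.factorial :=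
    hD.eventually (eventually_gt_nhds (Real.exp_pos _))
  filter_upwards [hpos] with N hN
  have hf : (0 : ℝ) < N.factorial := by positivity
  have hDpos : (0 : ℝ) < (numDerangementsOf N : ℝ) := by
    have h1 : (numDerangementsOf N : ℝ)
        = ((numDerangementsOf N : ℝ) / N.factorial) * N.factorial := by field_simp
    rw [h1]
    exact mul_pos hN hf
  have hDne : (numDerangementsOf N : ℝ) ≠ 0 := ne_of_gt hDpos
  have hcast : (numPairedDerangements N : ℝ) = (numDerangementsOf N : ℝ) - Qg N := by
    have h := paired_add_good' N
    have h2 : ((numPairedDerangements N + Qg N : ℕ) : ℝ) = (numDerangementsOf N : ℝ) := by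
      rw [h]
    push_cast at h2
    linarith
  rw [hcast]
  rw [Pi.div_apply]
  field_simp
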